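/- arXiv:2006.03421 — 2 statements merged into one kernel-verified Lean document; each statement's English description precedes it below -/
import Mathlib

section
/- (Erdős) For every natural number k there exists a finite simple graph G such that the chromatic number of G is greater than k and G contains no cycle of length less than k (equivalently, the girth of G is at least k). -/
open Finset SimpleGraph

namespace ErdosGirth


variable {α : Type*} [DecidableEq α]

/-- Weight of an "edge set" `E` within ground set `s`. -/
noncomputable def W (p q : ℝ) (s E : Finset α) : ℝ := p ^ E.card * q ^ (s \ E).card

lemma sum_W (p q : ℝ) (s : Finset α) :
    ∑ E ∈ s.powerset, W p q s E = (p + q) ^ s.card := by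
  have h := Finset.prod_add (fun _ : α => p) (fun _ : α => q) s
  simp only [Finset.prod_const] at h
  simp only [W]
  rw [← h]

lemma W_nonneg {p q : ℝ} (hp : 0 ≤ p) (hq : 0 ≤ q) (s E : Finset α) : 0 ≤ W p q s E :=
  mul_nonneg (pow_nonneg hp _) (pow_nonneg hq _)

lemma sum_W_superset (p q : ℝ) {s S : Finset α} (hS : S ⊆ s) :
    ∑ E ∈ s.powerset.filter (fun E => S ⊆ E), W p q s E
      = p ^ S.card * (p + q) ^ (s \ S).card := by
  rw [← sum_W p q (s \ S), Finset.mul_sum]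
  refine Finset.sum_nbij' (fun E => E \ S) (fun F => F ∪ S) ?_ ?_ ?_ ?_ ?_
  · intro E hE
    simp only [mem_filter, mem_powerset] at hE
    simp only [mem_powerset]
    exact sdiff_subset_sdiff hE.1 (le_refl _)
  · intro F hF
    simp only [mem_powerset] at hF
    simp only [mem_filter, mem_powerset]
    refine ⟨union_subset (hF.trans sdiff_subset) hS, subset_union_right⟩
  · intro E hE
    simp only [mem_filter, mem_powerset] at hE
    exact sdiff_union_of_subset hE.2
  · intro F hF
    simp only [mem_powerset, subset_sdiff] at hF
    exact union_sdiff_cancel_right hF.2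
  · intro E hE
    simp only [mem_filter, mem_powerset] at hE
    have hdisj : Disjoint (E \ S) S := sdiff_disjoint
    have hcard : E.card = (E \ S).card + S.card := by
      rw [← card_union_of_disjoint hdisj, sdiff_union_of_subset hE.2]
    have hsd : s \ E = (s \ S) \ (E \ S) := by
      ext x
      simp only [mem_sdiff]
      constructor
      · intro ⟨h1, h2⟩
        exact ⟨⟨h1, fun hx => h2 (hE.2 hx)⟩, fun ⟨hx, _⟩ => h2 hx⟩
      · intro ⟨⟨h1, h2⟩, h3⟩
        exact ⟨h1, fun hx => h3 ⟨hx, h2⟩⟩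
    rw [W, W, hcard, hsd, pow_add]
    ring

lemma sum_W_disjoint (p q : ℝ) {s T : Finset α} (hT : T ⊆ s) :
    ∑ E ∈ s.powerset.filter (fun E => Disjoint T E), W p q s E
      = q ^ T.card * (p + q) ^ (s \ T).card := by
  rw [← sum_W p q (s \ T), Finset.mul_sum]
  have hset : s.powerset.filter (fun E => Disjoint T E) = (s \ T).powerset := by
    ext E
    simp only [mem_filter, mem_powerset, subset_sdiff]
    constructor
    · intro ⟨h1, h2⟩; exact ⟨h1, h2.symm⟩
    · intro ⟨h1, h2⟩; exact ⟨h1, h2.symm⟩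
  rw [hset]
  refine Finset.sum_congr rfl ?_
  intro E hE
  simp only [mem_powerset, subset_sdiff] at hE
  have hsd : s \ E = T ∪ ((s \ T) \ E) := by
    ext x
    simp only [mem_sdiff, mem_union]
    constructor
    · intro ⟨h1, h2⟩
      by_cases hx : x ∈ T
      · exact Or.inl hx
      · exact Or.inr ⟨⟨h1, hx⟩, h2⟩
    · rintro (hx | ⟨⟨h1, _⟩, h3⟩)
      · exact ⟨hT hx, fun hE' => (Finset.disjoint_left.mp hE.2.symm hx) hE'⟩
      · exact ⟨h1, h3⟩
  have hdisj : Disjoint T ((s \ T) \ E) := disjoint_of_subset_right sdiff_subset disjoint_sdiff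
  rw [W, W, hsd, card_union_of_disjoint hdisj, pow_add]
  ring

/-- Markov: total weight where `c ≤ X` is at most `(∑ w * X) / c`. -/
lemma markov {A : Finset (Finset α)} {w X : Finset α → ℝ} {c : ℝ} (hc : 0 < c)
    (hw : ∀ E ∈ A, 0 ≤ w E) (hX : ∀ E ∈ A, 0 ≤ X E) :
    ∑ E ∈ A.filter (fun E => c ≤ X E), w E ≤ (∑ E ∈ A, w E * X E) / c := by
  rw [le_div_iff₀ hc]
  calc (∑ E ∈ A.filter (fun E => c ≤ X E), w E) * c
      = ∑ E ∈ A.filter (fun E => c ≤ X E), w E * c := by rw [Finset.sum_mul]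
    _ ≤ ∑ E ∈ A.filter (fun E => c ≤ X E), w E * X E := by
        refine Finset.sum_le_sum ?_
        intro E hE
        simp only [mem_filter] at hE
        exact mul_le_mul_of_nonneg_left hE.2 (hw E hE.1)
    _ ≤ ∑ E ∈ A, w E * X E := by
        refine Finset.sum_le_sum_of_subset_of_nonneg (filter_subset _ _) ?_
        intro E hE _
        exact mul_nonneg (hw E hE) (hX E hE)

/-- Union bound. -/
lemma union_bound {β : Type*} {A : Finset (Finset α)} {F : Finset β} {w : Finset α → ℝ}
    (hw : ∀ E ∈ A, 0 ≤ w E) (P : β → Finset α → Prop) [∀ T E, Decidable (P T E)] :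
    ∑ E ∈ A.filter (fun E => ∃ T ∈ F, P T E), w E
      ≤ ∑ T ∈ F, ∑ E ∈ A.filter (fun E => P T E), w E := by
  classical
  induction F using Finset.induction with
  | empty => simp
  | insert _ _ hx ih =>
    rename_i b F'
    rw [Finset.sum_insert hx]
    have hsplit : A.filter (fun E => ∃ T ∈ insert b F', P T E)
        ⊆ A.filter (fun E => P b E) ∪ A.filter (fun E => ∃ T ∈ F', P T E) := by
      intro E hE
      simp only [mem_filter, mem_union, mem_insert] at hE ⊢
      obtain ⟨hA, T, hT, hP⟩ := hE
      rcases hT with rfl | hT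
      · exact Or.inl ⟨hA, hP⟩
      · exact Or.inr ⟨hA, T, hT, hP⟩
    calc ∑ E ∈ A.filter (fun E => ∃ T ∈ insert b F', P T E), w E
        ≤ ∑ E ∈ A.filter (fun E => P b E) ∪ A.filter (fun E => ∃ T ∈ F', P T E), w E := by
          refine Finset.sum_le_sum_of_subset_of_nonneg hsplit ?_
          intro E hE _
          simp only [mem_union, mem_filter] at hE
          rcases hE with h | h
          · exact hw E h.1
          · exact hw E h.1
      _ ≤ ∑ E ∈ A.filter (fun E => P b E), w E
            + ∑ E ∈ A.filter (fun E => ∃ T ∈ F', P T E), w E := by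
          set A1 := A.filter (fun E => P b E)
          set A2 := A.filter (fun E => ∃ T ∈ F', P T E)
          have hu : A1 ∪ A2 = A1 ∪ (A2 \ A1) := by
            rw [Finset.union_sdiff_self_eq_union]
          rw [hu, Finset.sum_union Finset.disjoint_sdiff]
          refine add_le_add le_rfl ?_
          refine Finset.sum_le_sum_of_subset_of_nonneg Finset.sdiff_subset ?_
          intro E hE _
          exact hw E (Finset.mem_filter.mp hE).1
      _ ≤ _ := add_le_add le_rfl ih



variable {V : Type*} {G : SimpleGraph V} {u v : V}

lemma getVert_eq_support_get (p : G.Walk u v) (i : ℕ) (h : i < p.support.length) :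
    p.getVert i = p.support.get ⟨i, h⟩ := by
  induction p generalizing i with
  | nil =>
    simp only [Walk.support_nil, List.length_singleton] at h
    interval_cases i
    simp [Walk.getVert_zero]
  | cons hadj q ih =>
    rename_i a b c
    cases i with
    | zero => simp [Walk.getVert_zero]
    | succ i =>
      simp only [Walk.support_cons, List.length_cons] at h
      rw [Walk.getVert_cons_succ]
      rw [ih i (by omega)]
      simp [Walk.support_cons, List.get_cons_succ]

lemma IsCycle.getVert_succ_inj {c : G.Walk v v} (hc : c.IsCycle) {a b : ℕ}
    (ha : a < c.length) (hb : b < c.length) (h : c.getVert (a + 1) = c.getVert (b + 1)) :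
    a = b := by
  have hlen : c.support.length = c.length + 1 := Walk.length_support c
  have htl : c.support.tail.length = c.length := by
    rw [List.length_tail, hlen]; omega
  have h1 : c.getVert (a+1) = c.support.tail.get ⟨a, by omega⟩ := by
    rw [List.get_tail]
    exact getVert_eq_support_get c (a+1) (by omega)
  have h2 : c.getVert (b+1) = c.support.tail.get ⟨b, by omega⟩ := by
    rw [List.get_tail]
    exact getVert_eq_support_get c (b+1) (by omega)
  have hinj := List.nodup_iff_injective_get.mp hc.support_nodup
  have heq : (⟨a, by omega⟩ : Fin c.support.tail.length) = ⟨b, by omega⟩ :=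
    hinj (by rw [← h1, ← h2]; exact h)
  exact congrArg Fin.val heq

lemma getVert_mem_support (p : G.Walk u v) (i : ℕ) : p.getVert i ∈ p.support := by
  rcases le_or_gt i p.length with h | h
  · rcases le_or_gt p.length i with h' | h'
    · rw [Walk.getVert_of_length_le p h']
      exact Walk.end_mem_support p
    · exact Walk.mem_support_iff_exists_getVert.mpr ⟨i, rfl, le_of_lt h'⟩
  · rw [Walk.getVert_of_length_le p (le_of_lt h)]
    exact Walk.end_mem_support p



variable (k n : ℕ)

def shape (z : ℕ × (Fin k → Fin n)) : Prop :=
  (∀ j1 j2 : Fin k, (j1 : ℕ) < z.1 → (j2 : ℕ) < z.1 → z.2 j1 = z.2 j2 → j1 = j2) ∧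
  (∀ j : Fin k, z.1 ≤ (j : ℕ) → z.2 j = z.2 ⟨0, j.pos⟩)

def cedge (z : ℕ × (Fin k → Fin n)) (j : Fin k) : Sym2 (Fin n) :=
  s(z.2 j, z.2 ⟨((j : ℕ) + 1) % z.1 % k, Nat.mod_lt _ j.pos⟩)

variable {k n}

/-- the second index of the j-th cyclic edge, as a natural number -/
lemma cedge_snd_idx {z : ℕ × (Fin k → Fin n)} {j : Fin k} (hj : (j : ℕ) < z.1)
    (hik : z.1 < k) : (((j : ℕ) + 1) % z.1 % k) = ((j : ℕ) + 1) % z.1 := by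
  have h1 : ((j : ℕ) + 1) % z.1 < z.1 := Nat.mod_lt _ (by omega)
  exact Nat.mod_eq_of_lt (by omega)

lemma cedge_not_diag {z : ℕ × (Fin k → Fin n)} (hs : shape k n z) (hi3 : 3 ≤ z.1)
    (hik : z.1 < k) {j : Fin k} (hj : (j : ℕ) < z.1) : ¬ (cedge k n z j).IsDiag := by
  rw [cedge, Sym2.mk_isDiag_iff]
  intro h
  have h2 := hs.1 j ⟨((j : ℕ) + 1) % z.1 % k, Nat.mod_lt _ j.pos⟩ hj
    (by simp only []; rw [cedge_snd_idx hj hik]; exact Nat.mod_lt _ (by omega)) h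
  have h3 : (j : ℕ) = ((j : ℕ) + 1) % z.1 % k := congrArg Fin.val h2
  rw [cedge_snd_idx hj hik] at h3
  rcases Nat.lt_or_ge ((j : ℕ) + 1) z.1 with h4 | h4
  · rw [Nat.mod_eq_of_lt h4] at h3; omega
  · have : (j : ℕ) + 1 = z.1 := by omega
    rw [this, Nat.mod_self] at h3; omega

lemma cedge_injOn {z : ℕ × (Fin k → Fin n)} (hs : shape k n z) (hi3 : 3 ≤ z.1)
    (hik : z.1 < k) {j l : Fin k} (hj : (j : ℕ) < z.1) (hl : (l : ℕ) < z.1)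
    (h : cedge k n z j = cedge k n z l) : j = l := by
  set j' : Fin k := ⟨((j : ℕ) + 1) % z.1 % k, Nat.mod_lt _ j.pos⟩ with hj'def
  set l' : Fin k := ⟨((l : ℕ) + 1) % z.1 % k, Nat.mod_lt _ l.pos⟩ with hl'def
  have hj'v : (j' : ℕ) = ((j : ℕ) + 1) % z.1 := by rw [hj'def]; exact cedge_snd_idx hj hik
  have hl'v : (l' : ℕ) = ((l : ℕ) + 1) % z.1 := by rw [hl'def]; exact cedge_snd_idx hl hik
  have hj'lt : (j' : ℕ) < z.1 := by rw [hj'v]; exact Nat.mod_lt _ (by omega)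
  have hl'lt : (l' : ℕ) < z.1 := by rw [hl'v]; exact Nat.mod_lt _ (by omega)
  rw [cedge, cedge, Sym2.eq_iff] at h
  rcases h with ⟨h1, _⟩ | ⟨h1, h2⟩
  · exact hs.1 j l hj hl h1
  · -- z.2 j = z.2 l'  and  z.2 j' = z.2 l
    have e1 : j = l' := hs.1 j l' hj hl'lt h1
    have e2 : j' = l := hs.1 j' l hj'lt hl h2
    have v1 : (j : ℕ) = ((l : ℕ) + 1) % z.1 := by rw [e1, hl'v]
    have v2 : ((j : ℕ) + 1) % z.1 = (l : ℕ) := by rw [← hj'v, e2]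
    exfalso
    rcases Nat.lt_or_ge ((j : ℕ) + 1) z.1 with h4 | h4 <;>
      rcases Nat.lt_or_ge ((l : ℕ) + 1) z.1 with h5 | h5
    · rw [Nat.mod_eq_of_lt h4] at v2; rw [Nat.mod_eq_of_lt h5] at v1; omega
    · rw [Nat.mod_eq_of_lt h4] at v2
      have : (l : ℕ) + 1 = z.1 := by omega
      rw [this, Nat.mod_self] at v1; omega
    · have : (j : ℕ) + 1 = z.1 := by omega
      rw [this, Nat.mod_self] at v2; rw [Nat.mod_eq_of_lt h5] at v1; omega
    · have hj1 : (j : ℕ) + 1 = z.1 := by omega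
      have hl1 : (l : ℕ) + 1 = z.1 := by omega
      rw [hj1, Nat.mod_self] at v2; omega

lemma card_filter_lt_univ_fin (i : ℕ) (hik : i ≤ k) :
    ((univ : Finset (Fin k)).filter (fun j : Fin k => (j : ℕ) < i)).card = i := by
  have himg : ((univ : Finset (Fin k)).filter (fun j : Fin k => (j : ℕ) < i)).image
      (Fin.val) = Finset.range i := by
    ext a
    simp only [mem_image, mem_filter, mem_univ, true_and, mem_range]
    constructor
    · rintro ⟨j, hj, rfl⟩; exact hj
    · intro ha; exact ⟨⟨a, by omega⟩, ha, rfl⟩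
  have := Finset.card_image_of_injective
    ((univ : Finset (Fin k)).filter (fun j : Fin k => (j : ℕ) < i)) Fin.val_injective
  rw [himg, Finset.card_range] at this
  omega


variable (k n)

def DD : Finset (Sym2 (Fin n)) := univ.filter (fun e => ¬ e.IsDiag)

def ES (z : ℕ × (Fin k → Fin n)) : Finset (Sym2 (Fin n)) :=
  (univ.filter (fun j : Fin k => (j : ℕ) < z.1)).image (cedge k n z)

def cpred (E : Finset (Sym2 (Fin n))) (z : ℕ × (Fin k → Fin n)) : Prop :=
  shape k n z ∧ ∀ j : Fin k, (j : ℕ) < z.1 → cedge k n z j ∈ E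

instance (z : ℕ × (Fin k → Fin n)) : Decidable (shape k n z) := by
  unfold shape; infer_instance

instance (E : Finset (Sym2 (Fin n))) (z : ℕ × (Fin k → Fin n)) :
    Decidable (cpred k n E z) := by
  unfold cpred; infer_instance

def ZZ : Finset (ℕ × (Fin k → Fin n)) := (Finset.Ico 3 k) ×ˢ univ

def BB (E : Finset (Sym2 (Fin n))) : Finset (ℕ × (Fin k → Fin n)) :=
  (ZZ k n).filter (cpred k n E)

variable {k n}

lemma card_ES {z : ℕ × (Fin k → Fin n)} (hs : shape k n z) (hi3 : 3 ≤ z.1)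
    (hik : z.1 < k) : (ES k n z).card = z.1 := by
  rw [ES, Finset.card_image_of_injOn, card_filter_lt_univ_fin z.1 (le_of_lt hik)]
  intro j hj l hl h
  simp only [Finset.coe_filter, Set.mem_setOf_eq, mem_univ, true_and] at hj hl
  exact cedge_injOn hs hi3 hik hj hl h

lemma ES_subset_DD {z : ℕ × (Fin k → Fin n)} (hs : shape k n z) (hi3 : 3 ≤ z.1)
    (hik : z.1 < k) : ES k n z ⊆ DD n := by
  intro e he
  rw [ES, Finset.mem_image] at he
  obtain ⟨j, hj, rfl⟩ := he
  simp only [mem_filter, mem_univ, true_and] at hj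
  rw [DD, mem_filter]
  exact ⟨mem_univ _, cedge_not_diag hs hi3 hik hj⟩

lemma cpred_iff_ES_subset {E : Finset (Sym2 (Fin n))} {z : ℕ × (Fin k → Fin n)}
    (hs : shape k n z) : cpred k n E z ↔ ES k n z ⊆ E := by
  constructor
  · intro ⟨_, h2⟩ e he
    rw [ES, Finset.mem_image] at he
    obtain ⟨j, hj, rfl⟩ := he
    simp only [mem_filter, mem_univ, true_and] at hj
    exact h2 j hj
  · intro h
    refine ⟨hs, fun j hj => h ?_⟩
    rw [ES, Finset.mem_image]
    exact ⟨j, by simp [hj], rfl⟩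

lemma card_shape_le (i : ℕ) (hi1 : 1 ≤ i) (hik : i < k) :
    ((univ : Finset (Fin k → Fin n)).filter (fun f => shape k n (i, f))).card ≤ n ^ i := by
  classical
  have : ((univ : Finset (Fin k → Fin n)).filter (fun f => shape k n (i, f))).card
      ≤ (univ : Finset (Fin i → Fin n)).card := by
    refine Finset.card_le_card_of_injOn (fun f => f ∘ Fin.castLE (le_of_lt hik))
      (fun _ _ => mem_univ _) ?_
    intro f hf g hg h
    simp only [Finset.coe_filter, Set.mem_setOf_eq, mem_univ, true_and] at hf hg
    funext j
    rcases Nat.lt_or_ge (j : ℕ) i with hj | hj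
    · have := congrFun h ⟨(j : ℕ), hj⟩
      simpa using this
    · have h0 : (0 : ℕ) < i := hi1
      have hmid : f ⟨0, j.pos⟩ = g ⟨0, j.pos⟩ := by
        have := congrFun h ⟨0, h0⟩
        simpa [Function.comp, Fin.castLE] using this
      calc f j = f ⟨0, j.pos⟩ := hf.2 j hj
        _ = g ⟨0, j.pos⟩ := hmid
        _ = g j := (hg.2 j hj).symm
  simpa using this


variable (n) in
def pT (T : Finset (Fin n)) : Finset (Sym2 (Fin n)) :=
  ((⊤ : SimpleGraph {x // x ∈ T}).edgeFinset).image (Sym2.map Subtype.val)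

lemma card_pT (T : Finset (Fin n)) : (pT n T).card = T.card.choose 2 := by
  rw [pT, Finset.card_image_of_injective _ (Sym2.map.injective Subtype.val_injective)]
  classical
  rw [SimpleGraph.card_edgeFinset_top_eq_card_choose_two, Fintype.card_coe]

lemma exists_of_mem_pT {T : Finset (Fin n)} {e : Sym2 (Fin n)} (he : e ∈ pT n T) :
    ∃ x y : Fin n, x ∈ T ∧ y ∈ T ∧ x ≠ y ∧ e = s(x, y) := by
  rw [pT, Finset.mem_image] at he
  obtain ⟨e', he', rfl⟩ := he
  rw [SimpleGraph.mem_edgeFinset] at he'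
  induction e' with
  | _ x y =>
    rw [SimpleGraph.mem_edgeSet, SimpleGraph.top_adj] at he'
    exact ⟨x, y, x.2, y.2, Subtype.coe_injective.ne he', rfl⟩

lemma pT_subset_DD (T : Finset (Fin n)) : pT n T ⊆ DD n := by
  intro e he
  obtain ⟨x, y, _, _, hxy, rfl⟩ := exists_of_mem_pT he
  rw [DD, mem_filter]
  exact ⟨mem_univ _, by rwa [Sym2.mk_isDiag_iff]⟩

lemma mem_pT_of {T : Finset (Fin n)} {x y : Fin n} (hx : x ∈ T) (hy : y ∈ T)
    (hxy : x ≠ y) : s(x, y) ∈ pT n T := by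
  rw [pT, Finset.mem_image]
  refine ⟨s(⟨x, hx⟩, ⟨y, hy⟩), ?_, rfl⟩
  rw [SimpleGraph.mem_edgeFinset, SimpleGraph.mem_edgeSet, SimpleGraph.top_adj]
  exact fun h => hxy (congrArg Subtype.val h)


lemma expectation_le {k n : ℕ} (p : ℝ) (hp0 : 0 ≤ p) :
    ∑ E ∈ (DD n).powerset, W p (1 - p) (DD n) E * ((BB k n E).card : ℝ)
      ≤ ∑ i ∈ Finset.Ico 3 k, (n : ℝ) ^ i * p ^ i := by
  have hcard : ∀ E : Finset (Sym2 (Fin n)), ((BB k n E).card : ℝ)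
      = ∑ z ∈ ZZ k n, if cpred k n E z then (1 : ℝ) else 0 := by
    intro E
    rw [Finset.sum_boole, BB]
  calc ∑ E ∈ (DD n).powerset, W p (1 - p) (DD n) E * ((BB k n E).card : ℝ)
      = ∑ z ∈ ZZ k n, ∑ E ∈ (DD n).powerset.filter (fun E => cpred k n E z),
          W p (1 - p) (DD n) E := by
        simp_rw [hcard, Finset.mul_sum, mul_ite, mul_one, mul_zero]
        rw [Finset.sum_comm]
        refine Finset.sum_congr rfl ?_
        intro z _
        rw [← Finset.sum_filter]
    _ = ∑ z ∈ ZZ k n, if shape k n z then p ^ z.1 else 0 := by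
        refine Finset.sum_congr rfl ?_
        intro z hz
        rw [ZZ, Finset.mem_product, Finset.mem_Ico] at hz
        by_cases hs : shape k n z
        · rw [if_pos hs]
          have hfe : (DD n).powerset.filter (fun E => cpred k n E z)
              = (DD n).powerset.filter (fun E => ES k n z ⊆ E) := by
            refine Finset.filter_congr ?_
            intro E _
            simp only [cpred_iff_ES_subset hs]
          rw [hfe, sum_W_superset p (1 - p) (ES_subset_DD hs hz.1.1 hz.1.2),
            card_ES hs hz.1.1 hz.1.2]
          simp
        · rw [if_neg hs]
          rw [Finset.filter_false_of_mem, Finset.sum_empty]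
          intro E _
          exact fun hc => hs hc.1
    _ = ∑ i ∈ Finset.Ico 3 k,
          (((univ : Finset (Fin k → Fin n)).filter (fun f => shape k n (i, f))).card : ℝ)
            * p ^ i := by
        rw [ZZ, Finset.sum_product]
        refine Finset.sum_congr rfl ?_
        intro i _
        rw [← Finset.sum_filter]
        calc ∑ a ∈ filter (fun f => shape k n (i, f)) univ, p ^ (i, a).1
            = ∑ _a ∈ filter (fun f => shape k n (i, f)) univ, p ^ i :=
              Finset.sum_congr rfl (fun a _ => rfl)
          _ = _ := by rw [Finset.sum_const, nsmul_eq_mul]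
    _ ≤ ∑ i ∈ Finset.Ico 3 k, (n : ℝ) ^ i * p ^ i := by
        refine Finset.sum_le_sum ?_
        intro i hi
        rw [Finset.mem_Ico] at hi
        refine mul_le_mul_of_nonneg_right ?_ (pow_nonneg hp0 _)
        have := card_shape_le (n := n) i (by omega) hi.2
        calc (((univ : Finset (Fin k → Fin n)).filter (fun f => shape k n (i, f))).card : ℝ)
            ≤ ((n ^ i : ℕ) : ℝ) := by exact_mod_cast this
          _ = (n : ℝ) ^ i := by push_cast; ring

lemma geom_sum_le_pow (m : ℕ) (hm : 2 ≤ m) : ∀ k : ℕ, ∑ i ∈ Finset.range k, m ^ i ≤ m ^ k := by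
  intro k
  induction k with
  | zero => simp
  | succ k ih =>
    rw [Finset.sum_range_succ, pow_succ]
    have : m ^ k * 2 ≤ m ^ k * m := Nat.mul_le_mul_left _ hm
    omega

lemma sq_le_two_pow : ∀ a : ℕ, 4 ≤ a → a * a ≤ 2 ^ a := by
  intro a
  induction a with
  | zero => omega
  | succ a ih =>
    intro ha
    rcases Nat.lt_or_ge a 4 with h | h
    · interval_cases a <;> first | omega | norm_num
    · have h1 := ih h
      have h2 : 2 * a + 1 ≤ a * a := by nlinarith
      rw [pow_succ]
      nlinarith

lemma q_pow_M_le {M : ℕ} (hM : 1 ≤ M) : (1 - (M : ℝ)⁻¹) ^ M ≤ 1 / 2 := by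
  set x : ℝ := (M : ℝ)⁻¹ with hx
  have hM0 : (0 : ℝ) < M := by exact_mod_cast hM
  have hx0 : 0 ≤ x := by positivity
  have hx1 : x ≤ 1 := by
    rw [hx]
    rw [inv_le_one_iff₀]
    right; exact_mod_cast hM
  have hMx : (M : ℝ) * x = 1 := by
    rw [hx, mul_inv_cancel₀ (ne_of_gt hM0)]
  have h1 : 1 + (M : ℝ) * x ≤ (1 + x) ^ M := one_add_mul_le_pow (by linarith) M
  have h2 : (1 - x) ^ M * (1 + x) ^ M = (1 - x ^ 2) ^ M := by
    rw [← mul_pow]; ring_nf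
  have h3 : (1 - x ^ 2) ^ M ≤ 1 := by
    refine pow_le_one₀ (by nlinarith) (by nlinarith)
  have h4 : (0 : ℝ) ≤ (1 - x) ^ M := pow_nonneg (by linarith) M
  have h5 : (2 : ℝ) * (1 - x) ^ M ≤ (1 + x) ^ M * (1 - x) ^ M := by
    rw [hMx] at h1
    norm_num at h1
    nlinarith
  nlinarith

lemma q_pow_le_half_pow {M C : ℕ} (hM : 1 ≤ M) :
    (1 - (M : ℝ)⁻¹) ^ C ≤ (1 / 2 : ℝ) ^ (C / M) := by
  have hM0 : (0 : ℝ) < M := by exact_mod_cast hM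
  have hq0 : (0 : ℝ) ≤ 1 - (M : ℝ)⁻¹ := by
    have : (M : ℝ)⁻¹ ≤ 1 := by
      rw [inv_le_one_iff₀]; right; exact_mod_cast hM
    linarith
  have hq1 : (1 : ℝ) - (M : ℝ)⁻¹ ≤ 1 := by
    have : (0:ℝ) ≤ (M : ℝ)⁻¹ := by positivity
    linarith
  have hdm : M * (C / M) + C % M = C := Nat.div_add_mod C M
  calc (1 - (M : ℝ)⁻¹) ^ C
      = ((1 - (M : ℝ)⁻¹) ^ M) ^ (C / M) * (1 - (M : ℝ)⁻¹) ^ (C % M) := by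
        rw [← pow_mul, ← pow_add, hdm]
    _ ≤ (1 / 2 : ℝ) ^ (C / M) * 1 := by
        refine mul_le_mul ?_ (pow_le_one₀ hq0 hq1) (pow_nonneg hq0 _) (by positivity)
        exact pow_le_pow_left₀ (pow_nonneg hq0 _) (q_pow_M_le hM) _
    _ = (1 / 2 : ℝ) ^ (C / M) := mul_one _

lemma sum_filter_or_le {β : Type*} [DecidableEq β] {A : Finset β} {w : β → ℝ}
    (hw : ∀ E ∈ A, 0 ≤ w E) (P1 P2 : β → Prop) [DecidablePred P1] [DecidablePred P2] :
    ∑ E ∈ A.filter (fun x => P1 x ∨ P2 x), w E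
      ≤ ∑ E ∈ A.filter P1, w E + ∑ E ∈ A.filter P2, w E := by
  classical
  have hsub : A.filter (fun x => P1 x ∨ P2 x) ⊆ A.filter P1 ∪ A.filter P2 := by
    intro E hE
    simp only [mem_filter, mem_union] at hE ⊢
    tauto
  calc ∑ E ∈ A.filter (fun x => P1 x ∨ P2 x), w E
      ≤ ∑ E ∈ A.filter P1 ∪ A.filter P2, w E := by
        refine Finset.sum_le_sum_of_subset_of_nonneg hsub ?_
        intro E hE _
        simp only [mem_union, mem_filter] at hE
        rcases hE with h | h
        · exact hw E h.1
        · exact hw E h.1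
    _ ≤ _ := by
        rw [← Finset.union_sdiff_self_eq_union, Finset.sum_union Finset.disjoint_sdiff]
        refine add_le_add le_rfl ?_
        refine Finset.sum_le_sum_of_subset_of_nonneg Finset.sdiff_subset ?_
        intro E hE _
        exact hw E (Finset.mem_filter.mp hE).1

lemma exists_good (k : ℕ) (hk : 4 ≤ k) :
    ∃ (n s : ℕ) (E : Finset (Sym2 (Fin n))), E ⊆ DD n ∧
      0 < n ∧ 1 ≤ s ∧ 4 * (k * s) ≤ n ∧
      2 * (BB k n E).card < n ∧
      (∀ T ∈ Finset.powersetCard (s + 1) (univ : Finset (Fin n)),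
        ¬ Disjoint (pT n T) E) := by
  classical
  -- parameters (kept opaque via equations)
  obtain ⟨a, ha⟩ : ∃ a : ℕ, a = 33 * k ^ 2 + 4 := ⟨_, rfl⟩
  obtain ⟨m, hm⟩ : ∃ m : ℕ, m = 2 ^ a := ⟨_, rfl⟩
  obtain ⟨M, hM⟩ : ∃ M : ℕ, M = m ^ (2 * k - 1) := ⟨_, rfl⟩
  obtain ⟨n, hn⟩ : ∃ n : ℕ, n = m ^ (2 * k) := ⟨_, rfl⟩
  have ha4 : 4 ≤ a := by omega
  have hm2 : 2 ≤ m := by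
    rw [hm]
    calc 2 = 2 ^ 1 := (pow_one 2).symm
    _ ≤ 2 ^ a := Nat.pow_le_pow_right (by norm_num) (by omega)
  have hM1 : 1 ≤ M := by rw [hM]; exact Nat.one_le_pow _ _ (by omega)
  have hn0 : 0 < n := by rw [hn]; exact Nat.pow_pos (by omega)
  have hnMm : n = M * m := by
    rw [hn, hM, ← pow_succ]
    congr 1
    omega
  obtain ⟨s, hs⟩ : ∃ s : ℕ, s = n / (4 * k) := ⟨_, rfl⟩
  obtain ⟨t, ht⟩ : ∃ t : ℕ, t = s + 1 := ⟨_, rfl⟩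
  -- nat arithmetic facts
  have hm_big : 16 * a * k ^ 2 + 16 * k ≤ m := by
    have h1 := sq_le_two_pow a ha4
    have hkk : k ≤ k ^ 2 := by nlinarith
    have h2 : 16 * a * k ^ 2 + 16 * k ≤ a * a := by nlinarith
    rw [hm]; omega
  have hs_big : 4 * a * k * M + 4 * M ≤ s := by
    rw [hs, Nat.le_div_iff_mul_le (by omega)]
    calc (4 * a * k * M + 4 * M) * (4 * k) = M * (16 * a * k ^ 2 + 16 * k) := by ring
      _ ≤ M * m := Nat.mul_le_mul_left _ hm_big
      _ = n := hnMm.symm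
  have hs1 : 1 ≤ s := by
    have h4 : 4 * M ≤ s := le_trans (by omega) hs_big
    omega
  have hks : 4 * (k * s) ≤ n := by
    rw [hs]
    calc 4 * (k * (n / (4 * k))) = (n / (4 * k)) * (4 * k) := by ring
      _ ≤ n := Nat.div_mul_le_self n (4 * k)
  have hmk4 : 4 ≤ m ^ k := by
    calc 4 ≤ m := by omega
    _ = m ^ 1 := (pow_one m).symm
    _ ≤ m ^ k := Nat.pow_le_pow_right (by omega) (by omega)
  have h4mk : 4 * m ^ k ≤ n := by
    rw [hn, two_mul, pow_add]
    exact Nat.mul_le_mul_right _ hmk4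
  -- floor-division bound for the independence event
  have hCdiv : 2 * a * k * t + 2 ≤ t.choose 2 / M := by
    rw [Nat.le_div_iff_mul_le (by omega)]
    have hchoose : 2 * (t.choose 2) = t * s := by
      rw [Nat.choose_two_right, ht]
      simp only [Nat.add_sub_cancel]
      obtain ⟨c, hc⟩ := Nat.even_mul_succ_self s
      rw [mul_comm s (s + 1)] at hc
      omega
    have hmain : 2 * ((2 * a * k * t + 2) * M) ≤ 2 * (t.choose 2) := by
      rw [hchoose]
      calc 2 * ((2 * a * k * t + 2) * M) = (4 * a * k * M) * t + 4 * M := by ring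
        _ ≤ (4 * a * k * M) * t + (4 * M) * t := by nlinarith
        _ = t * (4 * a * k * M + 4 * M) := by ring
        _ ≤ t * s := Nat.mul_le_mul_left _ hs_big
    omega
  -- probability setup
  obtain ⟨p, hp⟩ : ∃ p : ℝ, p = ((M : ℝ))⁻¹ := ⟨_, rfl⟩
  have hM0 : (0 : ℝ) < M := by exact_mod_cast hM1
  have hp0 : 0 ≤ p := by rw [hp]; positivity
  have hp1 : p ≤ 1 := by
    rw [hp, inv_le_one_iff₀]; right; exact_mod_cast hM1
  have hq0 : 0 ≤ 1 - p := by linarith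
  have hn0R : (0 : ℝ) < (n : ℝ) := by exact_mod_cast hn0
  have htotal : ∑ E ∈ (DD n).powerset, W p (1 - p) (DD n) E = 1 := by
    rw [sum_W]
    norm_num
  have hw0 : ∀ E ∈ (DD n).powerset, 0 ≤ W p (1 - p) (DD n) E :=
    fun E _ => W_nonneg hp0 hq0 _ _
  -- np = m
  have hnp : (n : ℝ) * p = (m : ℝ) := by
    rw [hp, hnMm]
    push_cast
    rw [mul_comm (M : ℝ) (m : ℝ), mul_assoc, mul_inv_cancel₀ (ne_of_gt hM0), mul_one]
  -- part 1 : Markov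
  have hbad1 : ∑ E ∈ (DD n).powerset.filter
        (fun E => (n : ℝ) / 2 ≤ ((BB k n E).card : ℝ)), W p (1 - p) (DD n) E
      ≤ 1 / 2 := by
    have hc2 : (0 : ℝ) < (n : ℝ) / 2 := by linarith
    have hmkv := markov (A := (DD n).powerset) (w := W p (1 - p) (DD n))
      (X := fun E => ((BB k n E).card : ℝ)) (c := (n : ℝ) / 2) hc2 hw0
      (fun E _ => by positivity)
    refine le_trans hmkv ?_
    rw [div_le_iff₀ hc2]
    have hEX := expectation_le (k := k) (n := n) p hp0
    have hgeo : ∑ i ∈ Finset.Ico 3 k, (n : ℝ) ^ i * p ^ i ≤ (m : ℝ) ^ k := by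
      have h1 : ∀ i ∈ Finset.Ico 3 k, (n : ℝ) ^ i * p ^ i = (m : ℝ) ^ i := by
        intro i _
        rw [← mul_pow, hnp]
      rw [Finset.sum_congr rfl h1]
      have h2 : ∑ i ∈ Finset.Ico 3 k, (m : ℝ) ^ i ≤ ∑ i ∈ Finset.range k, (m : ℝ) ^ i := by
        refine Finset.sum_le_sum_of_subset_of_nonneg ?_ (fun i _ _ => by positivity)
        intro i hi
        rw [Finset.mem_Ico] at hi
        rw [Finset.mem_range]
        omega
      refine le_trans h2 ?_
      have h3 := geom_sum_le_pow m hm2 k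
      calc ∑ i ∈ Finset.range k, (m : ℝ) ^ i = ((∑ i ∈ Finset.range k, m ^ i : ℕ) : ℝ) := by
            push_cast; ring
        _ ≤ ((m ^ k : ℕ) : ℝ) := by exact_mod_cast h3
        _ = (m : ℝ) ^ k := by push_cast; ring
    refine le_trans (le_trans hEX hgeo) ?_
    have h4 : (4 : ℝ) * (m : ℝ) ^ k ≤ (n : ℝ) := by exact_mod_cast h4mk
    linarith
  -- part 2 : union bound
  have hbad2 : ∑ E ∈ (DD n).powerset.filter (fun E =>
        ∃ T ∈ Finset.powersetCard t (univ : Finset (Fin n)), Disjoint (pT n T) E),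
        W p (1 - p) (DD n) E ≤ 1 / 4 := by
    have hub := union_bound (A := (DD n).powerset)
      (F := Finset.powersetCard t (univ : Finset (Fin n)))
      (w := W p (1 - p) (DD n)) hw0 (fun T E => Disjoint (pT n T) E)
    refine le_trans hub ?_
    have hone : ∀ T ∈ Finset.powersetCard t (univ : Finset (Fin n)),
        ∑ E ∈ (DD n).powerset.filter (fun E => Disjoint (pT n T) E),
          W p (1 - p) (DD n) E = (1 - p) ^ (t.choose 2) := by
      intro T hT
      rw [Finset.mem_powersetCard] at hT
      rw [sum_W_disjoint p (1 - p) (pT_subset_DD T), card_pT, hT.2]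
      norm_num
    rw [Finset.sum_congr rfl hone, Finset.sum_const, nsmul_eq_mul,
      Finset.card_powersetCard, Finset.card_univ, Fintype.card_fin]
    have hc1 : ((n.choose t : ℕ) : ℝ) ≤ (n : ℝ) ^ t := by
      calc ((n.choose t : ℕ) : ℝ) ≤ ((n ^ t : ℕ) : ℝ) := by
            exact_mod_cast Nat.choose_le_pow n t
        _ = (n : ℝ) ^ t := by push_cast; ring
    have hc2 : (1 - p) ^ (t.choose 2) ≤ (1 / 2 : ℝ) ^ (t.choose 2 / M) := by
      rw [hp]
      exact q_pow_le_half_pow hM1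
    have hc3 : ((1 : ℝ) / 2) ^ (t.choose 2 / M) ≤ (1 / 2 : ℝ) ^ (2 * a * k * t + 2) :=
      pow_le_pow_of_le_one (by norm_num) (by norm_num) hCdiv
    have hn2 : (n : ℝ) = (2 : ℝ) ^ (2 * a * k) := by
      rw [hn, hm]
      push_cast
      rw [← pow_mul]
      congr 1
      ring
    calc ((n.choose t : ℕ) : ℝ) * (1 - p) ^ (t.choose 2)
        ≤ (n : ℝ) ^ t * (1 / 2 : ℝ) ^ (2 * a * k * t + 2) := by
          refine mul_le_mul hc1 (le_trans hc2 hc3) (pow_nonneg hq0 _) (by positivity)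
      _ = (2 : ℝ) ^ (2 * a * k * t) * (1 / 2 : ℝ) ^ (2 * a * k * t) * ((1 / 2) * (1 / 2)) := by
          rw [hn2, ← pow_mul, pow_add]
          ring
      _ ≤ (1 : ℝ) / 4 := by
          rw [← mul_pow]
          norm_num
  -- combine
  have hbad : ∑ E ∈ (DD n).powerset.filter (fun E =>
      ((n : ℝ) / 2 ≤ ((BB k n E).card : ℝ)) ∨
      (∃ T ∈ Finset.powersetCard t (univ : Finset (Fin n)), Disjoint (pT n T) E)),
      W p (1 - p) (DD n) E ≤ 3 / 4 := by
    refine le_trans (sum_filter_or_le hw0 _ _) ?_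
    linarith
  have hex : ∃ E ∈ (DD n).powerset, ¬ (((n : ℝ) / 2 ≤ ((BB k n E).card : ℝ)) ∨
      (∃ T ∈ Finset.powersetCard t (univ : Finset (Fin n)), Disjoint (pT n T) E)) := by
    by_contra hcon
    push_neg at hcon
    have heq : (DD n).powerset.filter (fun E =>
        ((n : ℝ) / 2 ≤ ((BB k n E).card : ℝ)) ∨
        (∃ T ∈ Finset.powersetCard t (univ : Finset (Fin n)), Disjoint (pT n T) E))
        = (DD n).powerset := by
      refine Finset.filter_true_of_mem ?_
      intro E hE
      exact hcon E hE
    rw [heq, htotal] at hbad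
    norm_num at hbad
  obtain ⟨E, hEA, hgood⟩ := hex
  push_neg at hgood
  rw [ht] at hgood
  refine ⟨n, s, E, ?_, hn0, hs1, hks, ?_, ?_⟩
  · rw [Finset.mem_powerset] at hEA
    exact hEA
  · have h1 : ((BB k n E).card : ℝ) < (n : ℝ) / 2 := hgood.1
    have h2 : ((2 * (BB k n E).card : ℕ) : ℝ) < (n : ℝ) := by push_cast; linarith
    exact_mod_cast h2
  · exact hgood.2

lemma main_aux (k : ℕ) (hk : 4 ≤ k) :
    ∃ (V : Type) (G : SimpleGraph V), Finite V ∧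
      (k : ℕ∞) < G.chromaticNumber ∧
      ∀ (v : V) (w : G.Walk v v), w.IsCycle → k ≤ w.length := by
  classical
  obtain ⟨n, s, E, hED, hn0, hs1, hks, hX, hT⟩ := exists_good k hk
  have hk0 : 0 < k := by omega
  let G : SimpleGraph (Fin n) := SimpleGraph.fromEdgeSet (↑E)
  let R : Finset (Fin n) := (BB k n E).image (fun z => z.2 ⟨0, hk0⟩)
  let Vs : Finset (Fin n) := univ \ R
  have hGadj : ∀ x y : Fin n, G.Adj x y ↔ (s(x, y) ∈ E ∧ x ≠ y) := by
    intro x y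
    rw [SimpleGraph.fromEdgeSet_adj]
    rw [Finset.mem_coe]
  refine ⟨(↑Vs : Set (Fin n)), SimpleGraph.induce (↑Vs : Set (Fin n)) G,
    inferInstance, ?_, ?_⟩
  · -- chromatic number
    rw [← not_le]
    intro hle
    have hcol : (SimpleGraph.induce (↑Vs : Set (Fin n)) G).Colorable k := by
      rwa [← SimpleGraph.chromaticNumber_le_iff_colorable]
    obtain C := hcol.some
    have hfiber : ∀ c : Fin k,
        ((univ : Finset (↑Vs : Set (Fin n))).filter (fun x => C x = c)).card ≤ s := by
      intro c
      by_contra hbig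
      push_neg at hbig
      have hcardF' : s + 1 ≤
          (((univ : Finset (↑Vs : Set (Fin n))).filter (fun x => C x = c)).image
            (fun x : (↑Vs : Set (Fin n)) => (x : Fin n))).card := by
        rw [Finset.card_image_of_injective _ Subtype.val_injective]
        omega
      obtain ⟨T, hTsub, hTcard⟩ := Finset.exists_subset_card_eq hcardF'
      have hTmem : T ∈ Finset.powersetCard (s + 1) (univ : Finset (Fin n)) := by
        rw [Finset.mem_powersetCard]
        exact ⟨Finset.subset_univ _, hTcard⟩
      have hnd := hT T hTmem
      rw [Finset.not_disjoint_iff] at hnd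
      obtain ⟨e, hepT, heE⟩ := hnd
      obtain ⟨x, y, hxT, hyT, hxy, rfl⟩ := exists_of_mem_pT hepT
      obtain ⟨x', hx'F, hx'⟩ := Finset.mem_image.mp (hTsub hxT)
      obtain ⟨y', hy'F, hy'⟩ := Finset.mem_image.mp (hTsub hyT)
      have hadj : (SimpleGraph.induce (↑Vs : Set (Fin n)) G).Adj x' y' := by
        show G.Adj ↑x' ↑y'
        rw [hGadj, hx', hy']
        exact ⟨heE, hxy⟩
      have hCne := C.valid hadj
      rw [Finset.mem_filter] at hx'F hy'F
      rw [hx'F.2, hy'F.2] at hCne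
      exact hCne rfl
    have hsum : (univ : Finset (↑Vs : Set (Fin n))).card
        = ∑ c ∈ (univ : Finset (Fin k)),
            ((univ : Finset (↑Vs : Set (Fin n))).filter (fun x => C x = c)).card :=
      Finset.card_eq_sum_card_fiberwise (fun x _ => Finset.mem_univ _)
    have hle2 : (univ : Finset (↑Vs : Set (Fin n))).card ≤ k * s := by
      rw [hsum]
      calc ∑ c ∈ (univ : Finset (Fin k)),
            ((univ : Finset (↑Vs : Set (Fin n))).filter (fun x => C x = c)).card
          ≤ ∑ _c ∈ (univ : Finset (Fin k)), s := Finset.sum_le_sum (fun c _ => hfiber c)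
        _ = k * s := by rw [Finset.sum_const, Finset.card_univ, Fintype.card_fin, smul_eq_mul]
    have hcardVs : (univ : Finset (↑Vs : Set (Fin n))).card = Vs.card := by
      rw [Finset.card_univ, ← Set.toFinset_card]
      congr 1
      simp
    have hRX : R.card ≤ (BB k n E).card := Finset.card_image_le
    have hVscard : Vs.card = n - R.card := by
      show (univ \ R).card = n - R.card
      rw [Finset.card_sdiff_of_subset (Finset.subset_univ _), Finset.card_univ, Fintype.card_fin]
    omega
  · -- girth
    intro v w' hcyc
    by_contra hlen
    push_neg at hlen
    let ι := SimpleGraph.Embedding.induce (G := G) (↑Vs : Set (Fin n))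
    let w := w'.map ι.toHom
    have hwc : w.IsCycle :=
      (SimpleGraph.Walk.map_isCycle_iff_of_injective ι.injective).mpr hcyc
    have hwl : w.length = w'.length := SimpleGraph.Walk.length_map _ _
    have h3 : 3 ≤ w.length := hwc.three_le_length
    have hik : w.length < k := by omega
    let f : Fin k → Fin n := fun j =>
      w.getVert (if (j : ℕ) < w.length then (j : ℕ) + 1 else 1)
    have hf_lt : ∀ j : Fin k, (j : ℕ) < w.length → f j = w.getVert ((j : ℕ) + 1) := by
      intro j hj
      simp only [f, if_pos hj]
    have hf_ge : ∀ j : Fin k, w.length ≤ (j : ℕ) → f j = w.getVert 1 := by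
      intro j hj
      simp only [f]
      rw [if_neg (by omega)]
    have hf0 : f ⟨0, hk0⟩ = w.getVert 1 := by
      have h0 : ((⟨0, hk0⟩ : Fin k) : ℕ) < w.length := by
        show 0 < w.length
        omega
      rw [hf_lt _ h0]
    have hshape : shape k n (w.length, f) := by
      constructor
      · intro j1 j2 hj1 hj2 hf12
        have hj1' : (j1 : ℕ) < w.length := hj1
        have hj2' : (j2 : ℕ) < w.length := hj2
        have e12 : w.getVert ((j1 : ℕ) + 1) = w.getVert ((j2 : ℕ) + 1) := by
          rw [← hf_lt _ hj1', ← hf_lt _ hj2']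
          exact hf12
        exact Fin.ext (IsCycle.getVert_succ_inj hwc hj1' hj2' e12)
      · intro j hj
        have hj' : w.length ≤ (j : ℕ) := hj
        show f j = f ⟨0, j.pos⟩
        rw [hf_ge _ hj']
        exact hf0.symm
    have hedges : ∀ j : Fin k, (j : ℕ) < w.length →
        cedge k n (w.length, f) j ∈ E := by
      intro j hj
      have hj' : (j : ℕ) < w.length := hj
      set r : ℕ := ((j : ℕ) + 1) % w.length with hr
      have hrlt : r < w.length := Nat.mod_lt _ (by omega)
      have hrk : r % k = r := Nat.mod_eq_of_lt (by omega)
      have hidxval : ((⟨((j : ℕ) + 1) % w.length % k,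
          Nat.mod_lt _ j.pos⟩ : Fin k) : ℕ) = r := hrk
      have hfidx : f ⟨((j : ℕ) + 1) % w.length % k, Nat.mod_lt _ j.pos⟩
          = w.getVert (r + 1) := by
        rw [hf_lt _ (by rw [hidxval]; exact hrlt), hidxval]
      have hcedge0 : cedge k n (w.length, f) j
          = s(f j, f ⟨((j : ℕ) + 1) % w.length % k, Nat.mod_lt _ j.pos⟩) := rfl
      have hcedge : cedge k n (w.length, f) j
          = s(w.getVert ((j : ℕ) + 1), w.getVert (r + 1)) := by
        rw [hcedge0, hf_lt _ hj', hfidx]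
      rw [hcedge]
      rcases Nat.lt_or_ge ((j : ℕ) + 1) w.length with hc | hc
      · have hreq : r = (j : ℕ) + 1 := by rw [hr, Nat.mod_eq_of_lt hc]
        rw [hreq]
        have hadj := w.adj_getVert_succ (i := (j : ℕ) + 1) hc
        rw [hGadj] at hadj
        exact hadj.1
      · have hieq : (j : ℕ) + 1 = w.length := by omega
        have hreq : r = 0 := by rw [hr, hieq, Nat.mod_self]
        rw [hreq, hieq]
        have hv0 : w.getVert w.length = w.getVert 0 := by
          rw [SimpleGraph.Walk.getVert_length, SimpleGraph.Walk.getVert_zero]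
        rw [hv0]
        have hadj := w.adj_getVert_succ (i := 0) (by omega)
        rw [hGadj] at hadj
        exact hadj.1
    have hzB : (w.length, f) ∈ BB k n E := by
      rw [BB, Finset.mem_filter]
      refine ⟨?_, hshape, hedges⟩
      rw [ZZ, Finset.mem_product]
      exact ⟨Finset.mem_Ico.mpr ⟨h3, hik⟩, Finset.mem_univ _⟩
    have hmemR : w.getVert 1 ∈ R := by
      rw [← hf0]
      exact Finset.mem_image.mpr ⟨(w.length, f), hzB, rfl⟩
    have hmemsup : w.getVert 1 ∈ w.support := getVert_mem_support w 1
    rw [SimpleGraph.Walk.support_map] at hmemsup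
    obtain ⟨x, hxsup, hx⟩ := List.mem_map.mp hmemsup
    have hxVs : (x : Fin n) ∈ Vs := x.2
    have hxval : ι.toHom x = (x : Fin n) := rfl
    rw [hxval] at hx
    rw [Finset.mem_sdiff] at hxVs
    rw [hx] at hxVs
    exact hxVs.2 hmemR

end ErdosGirth

/-- (Erdős) For every `k` there is a finite simple graph with chromatic number
greater than `k` and no cycle of length less than `k` (girth at least `k`). -/
theorem erdos_high_chromatic_high_girth (k : ℕ) :
    ∃ (V : Type) (G : SimpleGraph V), Finite V ∧
      (k : ℕ∞) < G.chromaticNumber ∧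
      ∀ (v : V) (w : G.Walk v v), w.IsCycle → k ≤ w.length := by
  rcases Nat.lt_or_ge k 4 with hk | hk
  · refine ⟨Fin (k + 1), ⊤, inferInstance, ?_, ?_⟩
    · rw [SimpleGraph.chromaticNumber_top, Fintype.card_fin]
      exact_mod_cast Nat.lt_succ_self k
    · intro v w hw
      have := hw.three_le_length
      omega
  · obtain ⟨V, G, h1, h2, h3⟩ := ErdosGirth.main_aux k hk
    exact ⟨V, G, h1, h2, h3⟩
end

section
/- (Vaught) Let T be a complete consistent theory in a countable first-order language such that for every n ∈ ℕ and every formula φ(x₀,…,x_{n−1}) consistent with T, there exists a formula ψ(x₀,…,x_{n−1}) complete for T such that every n-tuple satisfying ψ in any model of T also satisfies φ (i.e., the isolated types are dense). Then T has a countable atomic model: a countable model of T in which every finite tuple satisfies some formula complete for T. -/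
open FirstOrder FirstOrder.Language

universe u v

/-- A formula `φ(x₀,…,x_{n−1})` is consistent with `T` if some `n`-tuple in some
model of `T` satisfies it. -/
def ConsistentWith {L : FirstOrder.Language.{u, v}} (T : L.Theory) {n : ℕ}
    (φ : L.Formula (Fin n)) : Prop :=
  ∃ (M : Theory.ModelType.{u, v, max u v} T) (v : Fin n → M), φ.Realize v

/-- A formula `ψ(x₀,…,x_{n−1})` is complete for `T` if it is consistent with `T` and
for every formula `χ`, either every tuple satisfying `ψ` in any model of `T`
satisfies `χ`, or every such tuple satisfies `¬χ`. -/
def CompleteFormula {L : FirstOrder.Language.{u, v}} (T : L.Theory) {n : ℕ}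
    (ψ : L.Formula (Fin n)) : Prop :=
  ConsistentWith T ψ ∧ ∀ χ : L.Formula (Fin n),
    (∀ (M : Theory.ModelType.{u, v, max u v} T) (v : Fin n → M),
        ψ.Realize v → χ.Realize v) ∨
    (∀ (M : Theory.ModelType.{u, v, max u v} T) (v : Fin n → M),
        ψ.Realize v → ¬ χ.Realize v)

namespace VaughtAux

open Cardinal

variable {L : FirstOrder.Language.{u, v}}

/-- variable embedding sending `i < m` to itself and the last variable to the last. -/
def emap (m k : ℕ) (h : m ≤ k) : Fin (m + 1) → Fin (k + 1) :=
  fun i => if hi : (i : ℕ) < m then ⟨i, by omega⟩ else Fin.last k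

lemma snoc_helper {α : Type*} {k : ℕ} (f : Fin k → α) (b : α) (i : Fin (k + 1))
    (h : (i : ℕ) < k) : (Fin.snoc f b : Fin (k + 1) → α) i = f ⟨i, h⟩ := by
  exact Fin.snoc_castSucc (α := fun _ => α) (p := f) (x := b) (i := ⟨i, h⟩)

lemma snoc_comp_emap {α : Type*} {m k : ℕ} (h : m ≤ k) (g : ℕ → α) (b : α) :
    (Fin.snoc (fun i : Fin k => g i) b : Fin (k + 1) → α) ∘ emap m k h
      = Fin.snoc (fun i : Fin m => g i) b := by
  funext i
  by_cases hi : (i : ℕ) < m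
  · have h1 : emap m k h i = ⟨i, by omega⟩ := dif_pos hi
    rw [Function.comp_apply, h1, snoc_helper _ _ _ (show ((⟨(i : ℕ), by omega⟩ : Fin (k+1)) : ℕ) < k by simp; omega),
      snoc_helper _ _ i hi]
  · have h1 : emap m k h i = Fin.last k := dif_neg hi
    have h2 : i = Fin.last m := by
      ext
      simp only [Fin.val_last]
      have := i.isLt
      omega
    rw [Function.comp_apply, h1, Fin.snoc_last, h2, Fin.snoc_last]

lemma snoc_comp_castSucc {α : Type*} {k : ℕ} (f : Fin k → α) (b : α) :
    (Fin.snoc f b : Fin (k + 1) → α) ∘ Fin.castSucc = f :=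
  funext fun i => Fin.snoc_castSucc _ _ _


section
open scoped Classical
variable (T : L.Theory)

/-- candidate extension formula at a stage handling task `t`. -/
noncomputable def rho (t : Σ m : ℕ, L.Formula (Fin (m + 1))) (k : ℕ)
    (ψ : L.Formula (Fin k)) : L.Formula (Fin (k + 1)) :=
  if h : t.1 ≤ k then
    ψ.relabel Fin.castSucc ⊓ t.2.relabel (emap t.1 k h)
  else ψ.relabel Fin.castSucc

/-- the step formula: the Henkin extension if consistent, else the trivial extension. -/
noncomputable def extF (t : Σ m : ℕ, L.Formula (Fin (m + 1))) (k : ℕ)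
    (ψ : L.Formula (Fin k)) : L.Formula (Fin (k + 1)) :=
  if ConsistentWith T (rho t k ψ) then rho t k ψ else ψ.relabel Fin.castSucc

lemma rho_imp {t : Σ m : ℕ, L.Formula (Fin (m + 1))} {k : ℕ} {ψ : L.Formula (Fin k)}
    {M : Type*} [L.Structure M] (w : Fin (k + 1) → M) (hw : (rho t k ψ).Realize w) :
    ψ.Realize (w ∘ Fin.castSucc) := by
  rw [rho] at hw
  split_ifs at hw with h
  · rw [Formula.realize_inf] at hw
    rw [← Formula.realize_relabel]
    exact hw.1
  · rw [← Formula.realize_relabel]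
    exact hw

lemma extF_imp {t : Σ m : ℕ, L.Formula (Fin (m + 1))} {k : ℕ} {ψ : L.Formula (Fin k)}
    {M : Type*} [L.Structure M] (w : Fin (k + 1) → M) (hw : (extF T t k ψ).Realize w) :
    ψ.Realize (w ∘ Fin.castSucc) := by
  rw [extF] at hw
  split_ifs at hw with h
  · exact rho_imp w hw
  · rw [← Formula.realize_relabel]
    exact hw

lemma extF_consistent {t : Σ m : ℕ, L.Formula (Fin (m + 1))} {k : ℕ}
    {ψ : L.Formula (Fin k)} (hψ : ConsistentWith T ψ) :
    ConsistentWith T (extF T t k ψ) := by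
  rw [extF]
  split_ifs with h
  · exact h
  · obtain ⟨M, v, hv⟩ := hψ
    refine ⟨M, Fin.snoc v (Classical.arbitrary M), ?_⟩
    rw [Formula.realize_relabel, snoc_comp_castSucc]
    exact hv

lemma extF_henkin {t : Σ m : ℕ, L.Formula (Fin (m + 1))} {k : ℕ} {ψ : L.Formula (Fin k)}
    (h : t.1 ≤ k) (hc : ConsistentWith T (rho t k ψ))
    {M : Type*} [L.Structure M] (w : Fin (k + 1) → M) (hw : (extF T t k ψ).Realize w) :
    t.2.Realize (w ∘ emap t.1 k h) := by
  rw [extF, if_pos hc, rho, dif_pos h, Formula.realize_inf] at hw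
  rw [← Formula.realize_relabel]
  exact hw.2

/-- pullback of a formula along a variable-renaming, by existential quantification. -/
noncomputable def pullback {n k : ℕ} (g : Fin n → Fin k) (φ : L.Formula (Fin k)) :
    L.Formula (Fin n) :=
  Formula.iExs (Fin k)
    ((φ.relabel Sum.inr) ⊓ BoundedFormula.iInf
      (fun i : Fin n => Term.equal (Term.var (Sum.inl i)) (Term.var (Sum.inr (g i)))))

lemma realize_pullback {n k : ℕ} (g : Fin n → Fin k) (φ : L.Formula (Fin k))
    {M : Type*} [L.Structure M] (v : Fin n → M) :
    (pullback g φ).Realize v ↔ ∃ w : Fin k → M, φ.Realize w ∧ ∀ i, v i = w (g i) := by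
  rw [pullback, Formula.realize_iExs]
  constructor
  · rintro ⟨w, hw⟩
    rw [Formula.realize_inf] at hw
    obtain ⟨h1, h2⟩ := hw
    rw [Formula.realize_relabel] at h1
    refine ⟨w, by simpa using h1, fun i => ?_⟩
    have := BoundedFormula.realize_iInf.1 h2 i
    simpa [Term.equal, Term.bdEqual, BoundedFormula.Realize] using this
  · rintro ⟨w, hw, he⟩
    refine ⟨w, ?_⟩
    rw [Formula.realize_inf, Formula.realize_relabel]
    constructor
    · simpa using hw
    · rw [Formula.Realize]
      rw [BoundedFormula.realize_iInf]
      intro i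
      simpa [Term.equal, Term.bdEqual, BoundedFormula.Realize] using he i

lemma pullback_complete {n k : ℕ} (g : Fin n → Fin k) {φ : L.Formula (Fin k)}
    (hφ : CompleteFormula T φ) : CompleteFormula T (pullback g φ) := by
  constructor
  · obtain ⟨M, w, hw⟩ := hφ.1
    exact ⟨M, fun i => w (g i), (realize_pullback g φ _).2 ⟨w, hw, fun _ => rfl⟩⟩
  · intro χ
    rcases hφ.2 (χ.relabel g) with h | h
    · left
      intro M x hx
      obtain ⟨w, hw, he⟩ := (realize_pullback g φ x).1 hx
      have h2 := h M w hw
      rw [Formula.realize_relabel] at h2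
      have hxw : x = w ∘ g := funext he
      rw [hxw]
      exact h2
    · right
      intro M x hx
      obtain ⟨w, hw, he⟩ := (realize_pullback g φ x).1 hx
      have h2 := h M w hw
      rw [Formula.realize_relabel] at h2
      have hxw : x = w ∘ g := funext he
      rw [hxw]
      exact h2

lemma snoc_coe {α : Type*} (k : ℕ) (g : ℕ → α) :
    (fun i : Fin (k + 1) => g i) = Fin.snoc (fun i : Fin k => g i) (g k) := by
  funext i
  by_cases hi : (i : ℕ) < k
  · rw [snoc_helper _ _ i hi]
  · have h2 : i = Fin.last k := by
      ext
      simp only [Fin.val_last]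
      have := i.isLt
      omega
    rw [h2, Fin.snoc_last, Fin.val_last]

lemma countable_formula (hL : L.card ≤ Cardinal.aleph0) (m : ℕ) :
    Countable (L.Formula (Fin m)) := by
  have h1 : #(Σ n, L.BoundedFormula (Fin m) n) ≤ Cardinal.aleph0 := by
    refine (BoundedFormula.card_le).trans (max_le le_rfl ?_)
    refine (Cardinal.add_le_aleph0.2 ⟨?_, ?_⟩)
    · simp only [Cardinal.mk_fin, Cardinal.lift_natCast]
      exact (Cardinal.nat_lt_aleph0 m).le
    · rwa [Cardinal.lift_le_aleph0]
  haveI : Countable (Σ n, L.BoundedFormula (Fin m) n) := Cardinal.mk_le_aleph0_iff.1 h1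
  exact (sigma_mk_injective (β := fun n => L.BoundedFormula (Fin m) n)
    (i := 0)).countable

end

end VaughtAux

/-- (Vaught) If `T` is a complete consistent theory in a countable language whose
isolated types are dense (every formula consistent with `T` lies above a complete
formula), then `T` has a countable atomic model. -/
theorem vaught_atomic_model {L : FirstOrder.Language.{u, v}}
    (hL : L.card ≤ Cardinal.aleph0)
    (T : L.Theory) (hT : T.IsComplete)
    (hdense : ∀ (n : ℕ) (φ : L.Formula (Fin n)), ConsistentWith T φ →
      ∃ ψ : L.Formula (Fin n), CompleteFormula T ψ ∧
        ∀ (M : Theory.ModelType.{u, v, max u v} T) (v : Fin n → M),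
          ψ.Realize v → φ.Realize v) :
    ∃ M : Theory.ModelType.{u, v, max u v} T, Countable M ∧
      ∀ (n : ℕ) (a : Fin n → M),
        ∃ φ : L.Formula (Fin n), CompleteFormula T φ ∧ φ.Realize a := by
  classical
  haveI : ∀ m : ℕ, Countable (L.Formula (Fin (m + 1))) :=
    fun m => VaughtAux.countable_formula hL (m + 1)
  haveI : Nonempty ((m : ℕ) × L.Formula (Fin (m + 1))) := ⟨⟨0, ⊤⟩⟩
  obtain ⟨e0, he0⟩ := exists_surjective_nat ((m : ℕ) × L.Formula (Fin (m + 1)))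
  set e : ℕ → (m : ℕ) × L.Formula (Fin (m + 1)) := fun k => e0 (Nat.unpair k).1 with he_def
  have hsched : ∀ (t : (m : ℕ) × L.Formula (Fin (m + 1))) (K : ℕ), ∃ k, K ≤ k ∧ e k = t := by
    intro t K
    obtain ⟨i, hi⟩ := he0 t
    exact ⟨Nat.pair i K, Nat.right_le_pair i K, by simp [he_def, Nat.unpair_pair, hi]⟩
  choose pick hpickC hpickI using hdense
  have htop : ConsistentWith T (⊤ : L.Formula (Fin 0)) := by
    obtain ⟨M⟩ := hT.1
    exact ⟨M, fun i => i.elim0, by simp [Formula.Realize]⟩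
  -- the chain of complete formulas
  let chain : ∀ k : ℕ, {ψ : L.Formula (Fin k) // CompleteFormula T ψ} :=
    fun k => Nat.rec
      ⟨pick 0 ⊤ htop, hpickC 0 ⊤ htop⟩
      (fun k ih => ⟨pick (k + 1) (VaughtAux.extF T (e k) k ih.1)
          (VaughtAux.extF_consistent T ih.2.1),
        hpickC _ _ _⟩) k
  set c : ∀ k : ℕ, L.Formula (Fin k) := fun k => (chain k).1 with hc_def
  have hcC : ∀ k, CompleteFormula T (c k) := fun k => (chain k).2
  have hsucc : ∀ k, ∃ h, c (k + 1) = pick (k + 1) (VaughtAux.extF T (e k) k (c k)) h :=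
    fun k => ⟨_, rfl⟩
  have hstep : ∀ (k : ℕ) (M : Theory.ModelType.{u, v, max u v} T) (w : Fin (k + 1) → M),
      (c (k + 1)).Realize w → (VaughtAux.extF T (e k) k (c k)).Realize w := by
    intro k M w hw
    obtain ⟨hh, hqe⟩ := hsucc k
    rw [hqe] at hw
    exact hpickI _ _ hh M w hw
  have hchain : ∀ (k : ℕ) (M : Theory.ModelType.{u, v, max u v} T) (w : Fin (k + 1) → M),
      (c (k + 1)).Realize w → (c k).Realize (w ∘ Fin.castSucc) :=
    fun k M w hw => VaughtAux.extF_imp T w (hstep k M w hw)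
  have hcastLE : ∀ (j k : ℕ) (h : j ≤ k) (M : Theory.ModelType.{u, v, max u v} T)
      (w : Fin k → M), (c k).Realize w → (c j).Realize (w ∘ Fin.castLE h) := by
    intro j
    refine Nat.le_induction ?_ ?_
    · intro M w hw
      exact hw
    · intro k hk ih M w hw
      exact ih M (w ∘ Fin.castSucc) (hchain k M w hw)
  -- the Henkin theory with countably many new constants
  have hsat : ∀ i : ℕ, (((L.lhomWithConstants ℕ).onTheory T ∪
      ((fun k => Formula.equivSentence ((c k).relabel (fun i' : Fin k => (i' : ℕ)))) ''
        Set.Iic i)) : (L[[ℕ]]).Theory).IsSatisfiable := by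
    intro i
    obtain ⟨M, v, hv⟩ := (hcC i).1
    letI : (constantsOn ℕ).Structure M :=
      constantsOn.structure (fun j => if h : j < i then v ⟨j, h⟩ else Classical.arbitrary M)
    have hmod : M ⊨ (L.lhomWithConstants ℕ).onTheory T ∪
        ((fun k => Formula.equivSentence ((c k).relabel (fun i' : Fin k => (i' : ℕ)))) ''
          Set.Iic i) := by
      refine Theory.Model.union (((L.lhomWithConstants ℕ).onTheory_model T).2 inferInstance) ?_
      rw [Theory.model_iff]
      rintro φ ⟨j, hj, rfl⟩
      rw [Set.mem_Iic] at hj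
      rw [Formula.realize_equivSentence, Formula.realize_relabel]
      have h2 := hcastLE j i hj M v hv
      have h3 : ((fun a => (L.con a : M)) ∘ fun i' : Fin j => (i' : ℕ)) = v ∘ Fin.castLE hj := by
        funext x
        show (L.con (x : ℕ) : M) = v (Fin.castLE hj x)
        have hx : (x : ℕ) < i := lt_of_lt_of_le x.isLt hj
        show (if h : (x : ℕ) < i then v ⟨x, h⟩ else Classical.arbitrary M) = v (Fin.castLE hj x)
        rw [dif_pos hx]
        rfl
      rw [h3]
      exact h2
    exact ⟨Theory.Model.bundled hmod⟩
  have hdir : Directed (· ⊆ ·) (fun i : ℕ => ((L.lhomWithConstants ℕ).onTheory T ∪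
      ((fun k => Formula.equivSentence ((c k).relabel (fun i' : Fin k => (i' : ℕ)))) ''
        Set.Iic i))) := by
    refine Monotone.directed_le ?_
    intro i j hij
    exact Set.union_subset_union subset_rfl
      (Set.image_mono (Set.Iic_subset_Iic.2 hij))
  obtain ⟨NU⟩ := (Theory.isSatisfiable_directed_union_iff hdir).2 hsat
  letI : L.Structure NU := (L.lhomWithConstants ℕ).reduct NU
  haveI hexp : (L.lhomWithConstants ℕ).IsExpansionOn NU :=
    LHom.isExpansionOn_reduct (L.lhomWithConstants ℕ) NU
  haveI hNTmod : (NU : Type (max u v)) ⊨ T :=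
    ((L.lhomWithConstants ℕ).onTheory_model T).1
      (Theory.Model.mono NU.is_model (fun x hx => Set.mem_iUnion.2 ⟨0, Or.inl hx⟩))
  let NT : Theory.ModelType.{u, v, max u v} T := Theory.ModelType.of T NU
  let co : ℕ → NT := fun a => ((L.con a : NU))
  have factA : ∀ k : ℕ, (c k).Realize (fun i : Fin k => co (i : ℕ)) := by
    intro k
    have h1 : NU ⊨ Formula.equivSentence ((c k).relabel (fun i' : Fin k => (i' : ℕ))) :=
      Theory.realize_sentence_of_mem
        (⋃ i : ℕ, ((L.lhomWithConstants ℕ).onTheory T ∪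
          ((fun k' => Formula.equivSentence ((c k').relabel (fun i' : Fin k' => (i' : ℕ)))) ''
            Set.Iic i)))
        (Set.mem_iUnion.2 ⟨k, Or.inr ⟨k, Set.mem_Iic.2 le_rfl, rfl⟩⟩)
    rw [Formula.realize_equivSentence, Formula.realize_relabel] at h1
    exact h1
  -- the Henkin witness property
  have hB : ∀ (m : ℕ) (χ : L.Formula (Fin (m + 1))) (b : NT),
      χ.Realize (Fin.snoc (fun i : Fin m => co (i : ℕ)) b) →
      ∃ w : ℕ, χ.Realize (Fin.snoc (fun i : Fin m => co (i : ℕ)) (co w)) := by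
    intro m χ b hreal
    obtain ⟨k, hk, hek⟩ := hsched ⟨m, χ⟩ m
    have hmk : (e k).1 ≤ k := by rw [hek]; exact hk
    have key : ∀ b' : NT,
        ((e k).2).Realize (Fin.snoc (fun i : Fin (e k).1 => co (i : ℕ)) b') ↔
          χ.Realize (Fin.snoc (fun i : Fin m => co (i : ℕ)) b') := by
      intro b'
      rw [hek]
    have hcons : ConsistentWith T (VaughtAux.rho (e k) k (c k)) := by
      refine ⟨NT, Fin.snoc (fun i : Fin k => co (i : ℕ)) b, ?_⟩
      rw [VaughtAux.rho, dif_pos hmk, Formula.realize_inf, Formula.realize_relabel,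
        VaughtAux.snoc_comp_castSucc, Formula.realize_relabel,
        VaughtAux.snoc_comp_emap hmk (fun a => co a) b]
      exact ⟨factA k, (key b).2 hreal⟩
    have h1 := hstep k NT _ (factA (k + 1))
    have h2 := VaughtAux.extF_henkin T hmk hcons _ h1
    have h3 : ((fun i : Fin (k + 1) => co (i : ℕ)) ∘ VaughtAux.emap (e k).1 k hmk) =
        Fin.snoc (fun i : Fin (e k).1 => co (i : ℕ)) (co k) := by
      rw [VaughtAux.snoc_coe k (fun a => co a)]
      exact VaughtAux.snoc_comp_emap hmk (fun a => co a) (co k)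
    rw [h3] at h2
    exact ⟨k, (key (co k)).1 h2⟩
  -- the Tarski-Vaught property for the set of constants
  have hTV : ∀ (n : ℕ) (θ : L.Formula (Fin (n + 1))) (j : Fin n → ℕ) (b : NT),
      θ.Realize (Fin.snoc (fun i => co (j i)) b) →
      ∃ w : ℕ, θ.Realize (Fin.snoc (fun i => co (j i)) (co w)) := by
    intro n θ j b hb
    have hji : ∀ i, j i < (Finset.univ.sup j) + 1 :=
      fun i => Nat.lt_succ_of_le (Finset.le_sup (Finset.mem_univ i))
    set m := (Finset.univ.sup j) + 1 with hm_def
    let g : Fin (n + 1) → Fin (m + 1) := fun i =>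
      if h : (i : ℕ) < n then ⟨j ⟨i, h⟩, by have := hji ⟨i, h⟩; omega⟩ else Fin.last m
    have key : ∀ b' : NT,
        (θ.relabel g).Realize (Fin.snoc (fun i : Fin m => co (i : ℕ)) b') ↔
          θ.Realize (Fin.snoc (fun i => co (j i)) b') := by
      intro b'
      rw [Formula.realize_relabel]
      have hval : ((Fin.snoc (fun i : Fin m => co (i : ℕ)) b' : Fin (m + 1) → NT) ∘ g) =
          Fin.snoc (fun i => co (j i)) b' := by
        funext x
        by_cases hx : (x : ℕ) < n
        · have hg : g x = ⟨j ⟨x, hx⟩, by have := hji ⟨x, hx⟩; omega⟩ := dif_pos hx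
          rw [Function.comp_apply, hg,
            VaughtAux.snoc_helper _ _ _ (show (j ⟨(x : ℕ), hx⟩) < m from hji _),
            VaughtAux.snoc_helper _ _ x hx]
        · have hg : g x = Fin.last m := dif_neg hx
          have hx2 : x = Fin.last n := by
            ext
            simp only [Fin.val_last]
            have := x.isLt
            omega
          rw [Function.comp_apply, hg, Fin.snoc_last, hx2, Fin.snoc_last]
      rw [hval]
    obtain ⟨w, hw⟩ := hB m (θ.relabel g) b ((key b).2 hb)
    exact ⟨w, (key (co w)).1 hw⟩
  -- the substructure of constants
  let S : L.Substructure NT :=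
    { carrier := Set.range co
      fun_mem := by
        intro n f x hx
        choose j hj using hx
        have hx2 : x = fun i => co (j i) := funext fun i => (hj i).symm
        have hreal : (Term.equal (Term.func f (fun i => Term.var (Fin.castSucc i)))
            (Term.var (Fin.last n)) : L.Formula (Fin (n + 1))).Realize
            (Fin.snoc (fun i => co (j i)) (Structure.funMap f x)) := by
          rw [Formula.realize_equal]
          simp only [Term.realize_func, Term.realize_var, Fin.snoc_castSucc, Fin.snoc_last]
          rw [hx2]
        obtain ⟨w, hw⟩ := hTV n _ j (Structure.funMap f x) hreal
        rw [Formula.realize_equal] at hw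
        simp only [Term.realize_func, Term.realize_var, Fin.snoc_castSucc, Fin.snoc_last] at hw
        refine ⟨w, ?_⟩
        rw [hx2]
        exact hw.symm }
  have htv : ∀ (n : ℕ) (φ : L.BoundedFormula Empty (n + 1)) (x : Fin n → S) (a : NT),
      φ.Realize default (Fin.snoc ((↑) ∘ x) a : _ → NT) →
        ∃ b : S, φ.Realize default (Fin.snoc ((↑) ∘ x) b : _ → NT) := by
    intro n φ x a ha
    have hx : ∀ i, ∃ y, co y = ((x i : NT)) := fun i => (x i).2
    choose j hj using hx
    have hxj : ((↑) ∘ x : Fin n → NT) = fun i => co (j i) := funext fun i => (hj i).symm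
    have hθ : ∀ v : Fin (n + 1) → NT,
        ((φ.toFormula).relabel (Sum.elim (fun e : Empty => e.elim) id)).Realize v ↔
          φ.Realize default v := by
      intro v
      rw [Formula.realize_relabel, BoundedFormula.realize_toFormula]
      have e1 : ((v ∘ Sum.elim (fun e : Empty => e.elim) id) ∘ Sum.inl) = (default : Empty → NT) :=
        Subsingleton.elim _ _
      rw [e1]
      rfl
    rw [hxj] at ha
    obtain ⟨w, hw⟩ := hTV n ((φ.toFormula).relabel (Sum.elim (fun e : Empty => e.elim) id)) j a
      ((hθ _).2 ha)
    refine ⟨⟨co w, ⟨w, rfl⟩⟩, ?_⟩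
    rw [hxj]
    exact (hθ _).1 hw
  let E : L.ElementarySubstructure NT := S.toElementarySubstructure htv
  refine ⟨E.toModel T, ?_, ?_⟩
  · have hsur : Function.Surjective (fun w : ℕ => (⟨co w, ⟨w, rfl⟩⟩ : E)) := by
      rintro ⟨x, hx⟩
      obtain ⟨w, rfl⟩ := hx
      exact ⟨w, rfl⟩
    exact hsur.countable
  · intro n a0
    let a : Fin n → E := a0
    have hx : ∀ i, ∃ y, co y = ((a i : NT)) := fun i => (a i).2
    choose j hj using hx
    have hji : ∀ i, j i < (Finset.univ.sup j) + 1 :=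
      fun i => Nat.lt_succ_of_le (Finset.le_sup (Finset.mem_univ i))
    set k := (Finset.univ.sup j) + 1 with hk_def
    let g : Fin n → Fin k := fun i => ⟨j i, hji i⟩
    refine ⟨VaughtAux.pullback g (c k), VaughtAux.pullback_complete T g (hcC k), ?_⟩
    have h1 : (VaughtAux.pullback g (c k)).Realize ((↑) ∘ a : Fin n → NT) := by
      rw [VaughtAux.realize_pullback]
      exact ⟨fun i => co (i : ℕ), factA k, fun i => (hj i).symm⟩
    exact (E.isElementary _ a).1 h1
end
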